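/- arXiv:2009.10120 — 7 statements merged into one kernel-verified Lean document; each statement's English description precedes it below -/
import Mathlib

section
/- Let A be a commutative ring, P an A-module, and f : P → P an A-linear endomorphism. Let g : P[X] → P[X] be the A[X]-linear map g(m) = X·m − f̃(m), and let ε : P[X] → P_f be the map sending Σ mₙXⁿ to Σ fⁿ(mₙ). Then: (1) g is injective; (2) ε is a surjective A[X]-linear map; (3) the kernel of ε equals the image of g. (Exactness of the characteristic sequence 0 → P[X] →^{X−f} P[X] → P_f → 0.) -/
open Polynomial

namespace Stmt0Aux

variable {A : Type*} [CommRing A] {P : Type*} [AddCommGroup P] [Module A P]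
  (f : P →ₗ[A] P)

lemma single_eq (j : ℕ) (q : P) :
    (PolynomialModule.single A j q : PolynomialModule A P).coeff = Finsupp.single j q := rfl

lemma sub_apply (a b : PolynomialModule A P) (n : ℕ) : (a - b).coeff n = a.coeff n - b.coeff n :=
  rfl

lemma map_apply' (m : PolynomialModule A P) (n : ℕ) :
    (PolynomialModule.map A f m).coeff n = f (m.coeff n) := rfl

lemma X_smul_single (j : ℕ) (q : P) :
    (X : A[X]) • (PolynomialModule.single A j q : PolynomialModule A P)
      = PolynomialModule.single A (j + 1) q := by
  rw [← monomial_one_one_eq_X, PolynomialModule.monomial_smul_single, one_smul, add_comm]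

lemma X_smul_apply (m : PolynomialModule A P) (n : ℕ) :
    ((X : A[X]) • m).coeff n = if 1 ≤ n then m.coeff (n - 1) else 0 := by
  rw [← monomial_one_one_eq_X, PolynomialModule.monomial_smul_apply]
  simp

noncomputable def εL : PolynomialModule A P → Module.AEval' f :=
  fun m => Module.AEval'.of f (Finsupp.sum m.coeff fun n p => (f ^ n) p)

lemma εL_single (j : ℕ) (q : P) :
    εL f (PolynomialModule.single A j q) = Module.AEval'.of f ((f ^ j) q) := by
  unfold εL
  rw [single_eq, Finsupp.sum_single_index (by simp)]

lemma εL_add (m n : PolynomialModule A P) : εL f (m + n) = εL f m + εL f n := by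
  unfold εL
  rw [PolynomialModule.coeff_add, Finsupp.sum_add_index' (fun i => by simp) (fun i b c => by simp), map_add]

lemma εL_zero : εL f (0 : PolynomialModule A P) = 0 := by
  unfold εL
  rw [PolynomialModule.coeff_zero, Finsupp.sum_zero_index, map_zero]

lemma εL_sub (m n : PolynomialModule A P) : εL f (m - n) = εL f m - εL f n := by
  have h := εL_add f (m - n) n
  rw [sub_add_cancel] at h
  rw [h]; abel

lemma εL_smul (p : A[X]) (m : PolynomialModule A P) : εL f (p • m) = p • εL f m := by
  induction m using PolynomialModule.induction_linear with
  | zero => rw [smul_zero, εL_zero, smul_zero]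
  | add u v hu hv => rw [smul_add, εL_add, hu, hv, εL_add, smul_add]
  | single j q =>
    induction p using Polynomial.induction_on' with
    | add u v hu hv => rw [add_smul, εL_add, hu, hv, add_smul]
    | monomial i r =>
      rw [PolynomialModule.monomial_smul_single, εL_single, εL_single,
        ← Module.AEval.of_aeval_smul]
      congr 1
      rw [aeval_monomial, Module.End.smul_def]
      simp [pow_add, Module.End.mul_apply, Module.algebraMap_end_apply, map_smul]

lemma εL_map (m : PolynomialModule A P) :
    εL f (PolynomialModule.map A f m) = (X : A[X]) • εL f m := by
  induction m using PolynomialModule.induction_linear with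
  | zero => rw [map_zero, εL_zero, smul_zero]
  | add u v hu hv => rw [map_add, εL_add, hu, hv, εL_add, smul_add]
  | single j q =>
    rw [PolynomialModule.map_single, εL_single, εL_single, Module.AEval'.X_smul_of]
    congr 1
    rw [← Module.End.mul_apply, ← Module.End.mul_apply, ← pow_succ, ← pow_succ']

lemma εL_g (m : PolynomialModule A P) :
    εL f ((X : A[X]) • m - PolynomialModule.map A f m) = 0 := by
  rw [εL_sub, εL_smul, εL_map, sub_self]

lemma g_inj (m : PolynomialModule A P)
    (h : (X : A[X]) • m - PolynomialModule.map A f m = 0) : m = 0 := by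
  have hc : ∀ n, m.coeff n = f (m.coeff (n + 1)) := by
    intro n
    have := DFunLike.congr_fun (congrArg PolynomialModule.coeff (sub_eq_zero.mp h)) (n + 1)
    rwa [X_smul_apply, if_pos (by omega), Nat.add_sub_cancel, map_apply'] at this
  have hk : ∀ k n, m.coeff n = (f ^ k) (m.coeff (n + k)) := by
    intro k
    induction k with
    | zero => simp
    | succ k ih =>
      intro n
      rw [hc n, ih (n + 1), ← Module.End.mul_apply, ← pow_succ']
      ring_nf
  have hbig : ∀ n, m.coeff.support.sup id < n → m.coeff n = 0 := by
    intro n hn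
    by_contra h0
    have := Finset.le_sup (f := id) (Finsupp.mem_support_iff.mpr h0)
    simp only [id] at this
    omega
  refine PolynomialModule.ext (Finsupp.ext fun n => ?_)
  rw [hk (m.coeff.support.sup id + 1) n, hbig _ (by omega)]
  simp

lemma bound (m : PolynomialModule A P) (n : ℕ) (hn : m.coeff.support.sup id < n) : m.coeff n = 0 := by
  by_contra h0
  have := Finset.le_sup (f := id) (Finsupp.mem_support_iff.mpr h0)
  simp only [id] at this
  omega

lemma key (d : ℕ) : ∀ m : PolynomialModule A P, (∀ n, d ≤ n → m.coeff n = 0) → εL f m = 0 →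
    ∃ m', (X : A[X]) • m' - PolynomialModule.map A f m' = m := by
  induction d with
  | zero =>
    intro m hb _
    refine ⟨0, ?_⟩
    rw [smul_zero, map_zero, sub_zero]
    exact PolynomialModule.ext (Finsupp.ext fun n => (hb n (Nat.zero_le n)).symm)
  | succ d ih =>
    intro m hb hε
    match d with
    | 0 =>
      have hm : m = PolynomialModule.single A 0 (m.coeff 0) := by
        refine PolynomialModule.ext (Finsupp.ext fun n => ?_)
        match n with
        | 0 => simp [PolynomialModule.single_apply]
        | n + 1 => simp [PolynomialModule.single_apply, hb (n+1) (by omega)]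
      rw [hm, εL_single] at hε
      simp only [pow_zero, Module.End.one_apply] at hε
      have : m.coeff 0 = 0 := by
        simpa using (Module.AEval'.of f).injective (by simpa using hε)
      refine ⟨0, ?_⟩
      rw [smul_zero, map_zero, sub_zero, hm, this]
      simp
    | e + 1 =>
      set q := m.coeff (e + 1) with hq
      set r := m - PolynomialModule.single A (e + 1) q
        + PolynomialModule.single A e (f q) with hr
      have hrb : ∀ n, e + 1 ≤ n → r.coeff n = 0 := by
        intro n hn
        rw [hr, PolynomialModule.coeff_add, Finsupp.add_apply, sub_apply, PolynomialModule.coeff_single,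
          PolynomialModule.coeff_single, Finsupp.single_apply, Finsupp.single_apply]
        rcases eq_or_lt_of_le hn with h1 | h1
        · rw [if_pos h1, if_neg (by omega), ← h1, ← hq]; abel
        · rw [if_neg (by omega), if_neg (by omega), hb n (by omega)]; abel
      have hrε : εL f r = 0 := by
        have : r = m - ((X : A[X]) • PolynomialModule.single A e q
            - PolynomialModule.map A f (PolynomialModule.single A e q)) := by
          rw [X_smul_single, PolynomialModule.map_single, hr]; abel
        rw [this, εL_sub, εL_g, hε, sub_zero]
      obtain ⟨m'', hm''⟩ := ih r hrb hrε
      refine ⟨m'' + PolynomialModule.single A e q, ?_⟩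
      rw [smul_add, map_add, X_smul_single, PolynomialModule.map_single]
      calc (X : A[X]) • m'' + PolynomialModule.single A (e+1) q
            - (PolynomialModule.map A f m'' + PolynomialModule.single A e (f q))
          = ((X : A[X]) • m'' - PolynomialModule.map A f m'')
            + PolynomialModule.single A (e+1) q - PolynomialModule.single A e (f q) := by abel
        _ = m := by rw [hm'', hr]; abel

end Stmt0Aux

/-- Exactness of the characteristic sequence
`0 → P[X] →^{X−f} P[X] →^{ε} P_f → 0` : the map `g(m) = X·m − f̃(m)` is injective and
`A[X]`-linear, the evaluation map `ε(Σ mₙXⁿ) = Σ fⁿ(mₙ)` is a surjective `A[X]`-linear map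
to `P` with `X` acting through `f`, and `ker ε = im g`. -/
theorem stmt0 (A : Type*) [CommRing A] (P : Type*) [AddCommGroup P] [Module A P]
    (f : P →ₗ[A] P)
    (g : PolynomialModule A P → PolynomialModule A P)
    (hg : ∀ m, g m = (X : A[X]) • m - PolynomialModule.map A f m)
    (ε : PolynomialModule A P → Module.AEval' f)
    (hε : ∀ m : PolynomialModule A P,
      ε m = Module.AEval'.of f (Finsupp.sum m.coeff fun n p => (f ^ n) p)) :
    (IsLinearMap (Polynomial A) g ∧ Function.Injective g) ∧
    (IsLinearMap (Polynomial A) ε ∧ Function.Surjective ε) ∧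
    (∀ m, ε m = 0 ↔ m ∈ Set.range g) := by
  have hεL : ∀ m, ε m = Stmt0Aux.εL f m := hε
  have hglin : IsLinearMap (Polynomial A) g := by
    constructor
    · intro a b
      rw [hg, hg, hg, smul_add, map_add]
      abel
    · intro p a
      rw [hg, hg, smul_sub]
      congr 1
      · rw [smul_comm]
      · rw [PolynomialModule.map_smul]
        congr 1
        simp [Polynomial.map_id]
  refine ⟨⟨hglin, ?_⟩, ⟨?_, ?_⟩, ?_⟩
  · intro a b hab
    have h0 : g (a - b) = 0 := by
      have : g (a - b) = g a - g b := by
        rw [hg, hg, hg, smul_sub, map_sub]; abel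
      rw [this, hab, sub_self]
    rw [hg] at h0
    have := Stmt0Aux.g_inj f _ h0
    exact sub_eq_zero.mp this
  · exact ⟨fun a b => by rw [hεL, hεL, hεL, Stmt0Aux.εL_add],
      fun p a => by rw [hεL, hεL, Stmt0Aux.εL_smul]⟩
  · intro y
    refine ⟨PolynomialModule.single A 0 ((Module.AEval'.of f).symm y), ?_⟩
    rw [hεL, Stmt0Aux.εL_single]
    simp
  · intro m
    constructor
    · intro h0
      rw [hεL] at h0
      obtain ⟨m', hm'⟩ := Stmt0Aux.key f (m.coeff.support.sup id + 1) m
        (fun n hn => Stmt0Aux.bound m n (by omega)) h0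
      exact ⟨m', by rw [hg, hm']⟩
    · rintro ⟨m', rfl⟩
      rw [hεL, hg]
      exact Stmt0Aux.εL_g f m'
end

section
/- Let A be a commutative ring and S ⊆ A[X] a submonoid of the multiplicative monoid of A[X] all of whose elements are monic polynomials. Let P be an A-module and f : P → P an A-linear endomorphism such that p(f) = 0 for some p ∈ S (where p(f) denotes the evaluation of p at f). Then the localization of the A[X]-module P_f at S is the zero module, and consequently the map induced on S-localizations by g : P[X] → P[X], g(m) = X·m − f̃(m), is bijective. -/
open Polynomial

section Aux

variable {A : Type*} [CommRing A] {P : Type*} [AddCommGroup P] [Module A P]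

/-- The `A`-linear evaluation map `P[X] → P_f`, `single i m ↦ f^i m`. -/
noncomputable def epsAux (f : P →ₗ[A] P) :
    PolynomialModule A P →ₗ[A] Module.AEval' f :=
  (Finsupp.lsum A fun i => (Module.AEval'.of f).toLinearMap ∘ₗ (f ^ i)) ∘ₗ
    (PolynomialModule.coeffLinearEquiv A A).toLinearMap

lemma epsAux_single (f : P →ₗ[A] P) (i : ℕ) (m : P) :
    epsAux f (PolynomialModule.single A i m) = Module.AEval'.of f ((f ^ i) m) := by
  show (Finsupp.lsum A fun i => (Module.AEval'.of f).toLinearMap ∘ₗ (f ^ i))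
      (Finsupp.single i m) = _
  rw [Finsupp.lsum_single]
  rfl

/-- The `A[X]`-linear evaluation map `P[X] → P_f`. -/
noncomputable def epsPoly (f : P →ₗ[A] P) :
    PolynomialModule A P →ₗ[A[X]] Module.AEval' f where
  toFun := epsAux f
  map_add' := (epsAux f).map_add
  map_smul' p q := by
    simp only [RingHom.id_apply]
    induction q using PolynomialModule.induction_linear with
    | zero => simp
    | add a b ha hb => simp only [smul_add, map_add, ha, hb]
    | single i m =>
      induction p using Polynomial.induction_on' with
      | add p q hp hq => simp only [add_smul, map_add, hp, hq]
      | monomial n a =>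
        rw [PolynomialModule.monomial_smul_single, epsAux_single, epsAux_single,
          ← Module.AEval.of_aeval_smul]
        congr 1
        show (f ^ (n + i)) (a • m) = (aeval f (monomial n a)) ((f ^ i) m)
        simp [aeval_monomial, pow_add, mul_comm, Module.End.mul_apply]

lemma epsPoly_single (f : P →ₗ[A] P) (i : ℕ) (m : P) :
    epsPoly f (PolynomialModule.single A i m) = Module.AEval'.of f ((f ^ i) m) :=
  epsAux_single f i m

lemma epsPoly_map (f : P →ₗ[A] P) (m : PolynomialModule A P) :
    epsPoly f (PolynomialModule.map A f m) = (X : A[X]) • epsPoly f m := by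
  induction m using PolynomialModule.induction_linear with
  | zero => simp
  | add a b ha hb => simp only [map_add, ha, hb, smul_add]
  | single i m =>
    rw [PolynomialModule.map_single, epsPoly_single, epsPoly_single,
      Module.AEval'.X_smul_of]
    congr 1
    rw [← Module.End.mul_apply, ← Module.End.mul_apply, ← pow_succ, ← pow_succ']

lemma key_single (A : Type*) [CommRing A] {P : Type*} [AddCommGroup P] [Module A P]
    (f : P →ₗ[A] P) (g : PolynomialModule A P →ₗ[Polynomial A] PolynomialModule A P)
    (hg : ∀ m, g m = (X : A[X]) • m - PolynomialModule.map A f m) (i : ℕ) (m : P) :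
    ∃ q, PolynomialModule.single A i m
      = g q + PolynomialModule.single A 0 ((f ^ i) m) := by
  induction i generalizing m with
  | zero => exact ⟨0, by simp⟩
  | succ i ih =>
    obtain ⟨q, hq⟩ := ih (f m)
    refine ⟨PolynomialModule.single A i m + q, ?_⟩
    have h1 : g (PolynomialModule.single A i m)
        = PolynomialModule.single A (i + 1) m - PolynomialModule.single A i (f m) := by
      rw [hg, PolynomialModule.map_single, ← Polynomial.monomial_one_one_eq_X,
        PolynomialModule.monomial_smul_single, one_smul, add_comm]
    have h2 : (f ^ (i + 1)) m = (f ^ i) (f m) := by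
      rw [pow_succ, Module.End.mul_apply]
    rw [map_add, h1, h2, hq]
    abel

lemma key_all (A : Type*) [CommRing A] {P : Type*} [AddCommGroup P] [Module A P]
    (f : P →ₗ[A] P) (g : PolynomialModule A P →ₗ[Polynomial A] PolynomialModule A P)
    (hg : ∀ m, g m = (X : A[X]) • m - PolynomialModule.map A f m)
    (q : PolynomialModule A P) :
    ∃ q', q = g q' + PolynomialModule.single A 0
      ((Module.AEval'.of f).symm (epsPoly f q)) := by
  induction q using PolynomialModule.induction_linear with
  | zero => exact ⟨0, by simp⟩
  | add a b ha hb =>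
    obtain ⟨qa, hqa⟩ := ha
    obtain ⟨qb, hqb⟩ := hb
    refine ⟨qa + qb, ?_⟩
    simp only [map_add, PolynomialModule.single_add]
    conv_lhs => rw [hqa, hqb]
    abel
  | single i m =>
    obtain ⟨q, hq⟩ := key_single A f g hg i m
    exact ⟨q, by simpa [epsPoly_single] using hq⟩

lemma exact_g_eps (A : Type*) [CommRing A] {P : Type*} [AddCommGroup P] [Module A P]
    (f : P →ₗ[A] P) (g : PolynomialModule A P →ₗ[Polynomial A] PolynomialModule A P)
    (hg : ∀ m, g m = (X : A[X]) • m - PolynomialModule.map A f m) :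
    Function.Exact g (epsPoly f) := by
  intro q
  constructor
  · intro hq
    obtain ⟨q', hq'⟩ := key_all A f g hg q
    exact ⟨q', by simpa [hq] using hq'.symm⟩
  · rintro ⟨m, rfl⟩
    rw [hg, map_sub, epsPoly_map, map_smul, sub_self]

end Aux

/-- If `S ⊆ A[X]` is a submonoid of monic polynomials and `f : P → P` is an
`A`-linear endomorphism with `p(f) = 0` for some `p ∈ S`, then the `S`-localization of the
`A[X]`-module `P_f` is zero, and the map induced on `S`-localizations by
`g(m) = X·m − f̃(m)` on `P[X]` is bijective. -/
theorem stmt1 (A : Type*) [CommRing A] (P : Type*) [AddCommGroup P] [Module A P]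
    (f : P →ₗ[A] P) (S : Submonoid (Polynomial A))
    (hS : ∀ p ∈ S, p.Monic)
    (htors : ∃ p ∈ S, (Polynomial.aeval f p : P →ₗ[A] P) = 0)
    (g : PolynomialModule A P →ₗ[Polynomial A] PolynomialModule A P)
    (hg : ∀ m, g m = (X : A[X]) • m - PolynomialModule.map A f m) :
    Subsingleton (LocalizedModule S (Module.AEval' f)) ∧
    Function.Bijective (LocalizedModule.map S g) := by
  obtain ⟨p, hpS, hp⟩ := htors
  have hsub : Subsingleton (LocalizedModule S (Module.AEval' f)) := by
    rw [LocalizedModule.subsingleton_iff]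
    intro m
    refine ⟨p, hpS, ?_⟩
    apply (Module.AEval'.of f).symm.injective
    rw [Module.AEval.of_symm_smul, map_zero, hp]
    simp
  refine ⟨hsub, ?_⟩
  -- injectivity of g
  have ginj : Function.Injective g := by
    rw [← LinearMap.ker_eq_bot, LinearMap.ker_eq_bot']
    intro m hm
    rw [hg m, sub_eq_zero] at hm
    by_contra hne
    have hmap : ∀ n : ℕ, (PolynomialModule.map A f m).coeff n = f (m.coeff n) := fun n => rfl
    have hco : ∀ n : ℕ, m.coeff n = f (m.coeff (n + 1)) := by
      intro n
      have h := congrArg (fun q : PolynomialModule A P => q.coeff (n + 1)) hm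
      rw [← Polynomial.monomial_one_one_eq_X, PolynomialModule.monomial_smul_apply,
        hmap] at h
      simpa using h
    set m' : ℕ →₀ P := m.coeff with hm'
    have hsupp : m'.support.Nonempty := Finsupp.support_nonempty_iff.mpr
      (fun h => hne (PolynomialModule.coeff_eq_zero.mp h))
    set n := m'.support.max' hsupp with hn
    have h1 : m' n ≠ 0 := Finsupp.mem_support_iff.mp (m'.support.max'_mem hsupp)
    have h2 : m' (n + 1) = 0 := by
      by_contra h2
      have := m'.support.le_max' (n + 1) (Finsupp.mem_support_iff.mpr h2)
      omega
    have := hco n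
    rw [show (m.coeff (n+1) : P) = m' (n+1) from rfl, h2, map_zero] at this
    exact h1 this
  -- the IsLocalizedModule version of the map is bijective
  have hbij : Function.Bijective (IsLocalizedModule.map S
      (LocalizedModule.mkLinearMap S (PolynomialModule A P))
      (LocalizedModule.mkLinearMap S (PolynomialModule A P)) g) := by
    constructor
    · exact IsLocalizedModule.map_injective S _ _ g ginj
    · intro y
      have hex := LocalizedModule.map_exact S g (epsPoly f) (exact_g_eps A f g hg)
      have h0 : (IsLocalizedModule.map S
          (LocalizedModule.mkLinearMap S (PolynomialModule A P))
          (LocalizedModule.mkLinearMap S (Module.AEval' f)) (epsPoly f)) y = 0 :=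
        Subsingleton.elim _ _
      exact (hex y).mp h0
  have heq : ⇑(LocalizedModule.map S g) = ⇑(IsLocalizedModule.map S
      (LocalizedModule.mkLinearMap S (PolynomialModule A P))
      (LocalizedModule.mkLinearMap S (PolynomialModule A P)) g) := by
    funext x
    induction x using LocalizedModule.induction_on with
    | h m s =>
      rw [LocalizedModule.map_mk, IsLocalizedModule.mk_eq_mk', IsLocalizedModule.mk_eq_mk',
        IsLocalizedModule.map_mk']
  exact heq ▸ hbij
end

section
/- Let A be a commutative ring, S ⊆ A[X] a submonoid all of whose elements are monic polynomials, and T = {reverse(p) : p ∈ S}, where for monic p of degree n, reverse(p)(X) = Xⁿ·p(1/X). Let P be an A-module and f : P → P an A-linear endomorphism such that p(f) = 0 for some p ∈ S. Then the map induced on T-localizations by the A[X]-linear map h : P[X] → P[X], h(m) = m − X·f̃(m), is bijective. (The map 1 − fX becomes an isomorphism after localizing at T.) -/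
open Polynomial

section Aux
open Finset

noncomputable def Ftil (A : Type*) [CommRing A] (P : Type*) [AddCommGroup P] [Module A P]
    (f : P →ₗ[A] P) : PolynomialModule A P →ₗ[A[X]] PolynomialModule A P :=
  { PolynomialModule.map A f with
    map_smul' := fun c x => by
      simp only [AddHom.toFun_eq_coe, LinearMap.coe_toAddHom, RingHom.id_apply]
      rw [PolynomialModule.map_smul]
      congr 1
      simp }

lemma Ftil_single (A : Type*) [CommRing A] (P : Type*) [AddCommGroup P] [Module A P]
    (f : P →ₗ[A] P) (k : ℕ) (m : P) :
    (Ftil A P f) (PolynomialModule.single A k m) = PolynomialModule.single A k (f m) :=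
  PolynomialModule.map_single A f k m

lemma Ftil_pow_single (A : Type*) [CommRing A] (P : Type*) [AddCommGroup P] [Module A P]
    (f : P →ₗ[A] P) (j k : ℕ) (m : P) :
    ((Ftil A P f) ^ j) (PolynomialModule.single A k m) =
      PolynomialModule.single A k ((f ^ j) m) := by
  induction j generalizing m with
  | zero => simp
  | succ j ih =>
      rw [pow_succ, Module.End.mul_apply, Ftil_single, ih, pow_succ, Module.End.mul_apply]

lemma Z_eq_zero (A : Type*) [CommRing A] (P : Type*) [AddCommGroup P] [Module A P]
    (f : P →ₗ[A] P) (p : A[X]) (hp0 : (Polynomial.aeval f p : P →ₗ[A] P) = 0) :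
    (∑ j ∈ range (p.natDegree + 1), p.coeff j • (Ftil A P f) ^ j
      : Module.End A[X] (PolynomialModule A P)) = 0 := by
  apply LinearMap.ext
  intro m
  induction m using PolynomialModule.induction_linear with
  | zero => simp
  | add x y hx hy => simp [map_add, hx, hy]
  | single k v =>
      rw [LinearMap.zero_apply, LinearMap.coe_sum, Finset.sum_apply]
      have e1 : ∀ j ∈ range (p.natDegree + 1),
          (p.coeff j • (Ftil A P f) ^ j) (PolynomialModule.single A k v)
            = PolynomialModule.single A k ((p.coeff j • f ^ j) v) := by
        intro j _
        rw [LinearMap.smul_apply, Ftil_pow_single, LinearMap.smul_apply,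
          PolynomialModule.single_smul]
      rw [Finset.sum_congr rfl e1]
      change ∑ x ∈ _, PolynomialModule.lsingle A k _ = 0
      rw [← map_sum]
      have e2 := Polynomial.aeval_eq_sum_range (R := A) (p := p) f
      rw [hp0] at e2
      have e3 : ∑ x ∈ range (p.natDegree + 1), (p.coeff x • f ^ x) v = 0 := by
        rw [← LinearMap.sum_apply, ← e2, LinearMap.zero_apply]
      rw [e3, map_zero]

lemma reflect_sum' {A : Type*} [CommRing A] (n : ℕ) {ι : Type*} (s : Finset ι) (g : ι → A[X]) :
    reflect n (∑ i ∈ s, g i) = ∑ i ∈ s, reflect n (g i) := by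
  classical
  induction s using Finset.induction with
  | empty => simp [reflect_zero]
  | insert a s hi ih => rw [Finset.sum_insert hi, Finset.sum_insert hi, reflect_add, ih]

lemma rev_eq (A : Type*) [CommRing A] (p : A[X]) :
    p.reverse = ∑ j ∈ range (p.natDegree + 1), C (p.coeff j) * X ^ (p.natDegree - j) := by
  set n := p.natDegree
  have h1 : p.reverse = reflect n p := rfl
  rw [h1]
  conv_lhs => rw [p.as_sum_range_C_mul_X_pow]
  rw [reflect_sum']
  refine Finset.sum_congr rfl fun j hj => ?_
  simp only [reflect_C_mul_X_pow]
  rw [revAt_le (Finset.mem_range_succ_iff.mp hj)]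
lemma key (A : Type*) [CommRing A] (P : Type*) [AddCommGroup P] [Module A P]
    (f : P →ₗ[A] P) (p : A[X]) (hp0 : (Polynomial.aeval f p : P →ₗ[A] P) = 0)
    (h : Module.End A[X] (PolynomialModule A P))
    (hF : h = 1 - (X : A[X]) • Ftil A P f) :
    ∃ q : Module.End A[X] (PolynomialModule A P),
      h * q = p.reverse • 1 ∧ q * h = p.reverse • 1 := by
  haveI i0 : IsScalarTower A[X] A[X] (PolynomialModule A P) :=
    ⟨fun x y z => by rw [smul_eq_mul, mul_smul]⟩
  haveI i1 : SMulCommClass A[X] A[X] (PolynomialModule A P) :=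
    ⟨fun x y z => by rw [← mul_smul, mul_comm, mul_smul]⟩
  set F := Ftil A P f with hFdef
  set G : Module.End A[X] (PolynomialModule A P) := (X : A[X]) • F with hG
  set n := p.natDegree with hn
  refine ⟨∑ j ∈ range (n+1), (C (p.coeff j) * X ^ (n-j)) • ∑ i ∈ range j, G ^ i, ?_, ?_⟩
  all_goals {
    rw [hF]
    first
    | rw [Finset.mul_sum]
    | rw [Finset.sum_mul]
    have geom : ∀ j, (1 - G) * ((C (p.coeff j) * X ^ (n-j)) • ∑ i ∈ range j, G ^ i)
        = (C (p.coeff j) * X ^ (n-j)) • (1 - G ^ j) := by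
      intro j
      rw [mul_smul_comm (C (p.coeff j) * X ^ (n-j)) (1-G) (∑ i ∈ range j, G ^ i)]
      congr 1
      rw [← neg_sub G 1, neg_mul, mul_geom_sum, neg_sub]
    have geom' : ∀ j, ((C (p.coeff j) * X ^ (n-j)) • ∑ i ∈ range j, G ^ i) * (1 - G)
        = (C (p.coeff j) * X ^ (n-j)) • (1 - G ^ j) := by
      intro j
      rw [smul_mul_assoc (C (p.coeff j) * X ^ (n-j)) (∑ i ∈ range j, G ^ i) (1-G)]
      congr 1
      rw [← neg_sub G 1, mul_neg, geom_sum_mul, neg_sub]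
    rw [Finset.sum_congr rfl (fun j _ => by first | exact geom j | exact geom' j)]
    have split : ∑ j ∈ range (n+1), (C (p.coeff j) * X ^ (n-j)) • (1 - G ^ j)
        = (∑ j ∈ range (n+1), C (p.coeff j) * X ^ (n-j)) • (1 : Module.End A[X] (PolynomialModule A P))
          - ∑ j ∈ range (n+1), (C (p.coeff j) * X ^ (n-j)) • G ^ j := by
      rw [Finset.sum_smul, ← Finset.sum_sub_distrib]
      exact Finset.sum_congr rfl fun j _ => smul_sub _ _ _
    rw [split, ← rev_eq]
    have zero2 : ∑ j ∈ range (n+1), (C (p.coeff j) * X ^ (n-j)) • G ^ j = 0 := by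
      have e : ∀ j ∈ range (n+1), (C (p.coeff j) * X ^ (n-j)) • G ^ j
          = (X : A[X]) ^ n • (p.coeff j • F ^ j) := by
        intro j hj
        have hjn : j ≤ n := Finset.mem_range_succ_iff.mp hj
        rw [hG, _root_.smul_pow (X : A[X]) F j, smul_smul]
        rw [show p.coeff j • F ^ j = C (p.coeff j) • F ^ j by
          rw [← Polynomial.algebraMap_eq, algebraMap_smul]]
        rw [smul_smul]
        congr 1
        rw [mul_assoc, ← pow_add, Nat.sub_add_cancel hjn, mul_comm]
      rw [Finset.sum_congr rfl e, ← Finset.smul_sum, Z_eq_zero A P f p hp0, smul_zero]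
    rw [zero2, sub_zero]
  }

end Aux

/-- Let `S ⊆ A[X]` be a submonoid of monic polynomials and
`T = {reverse(p) : p ∈ S}` the multiplicative set of their reversals. If `f : P → P` is an
`A`-linear endomorphism with `p(f) = 0` for some `p ∈ S`, then the map induced on
`T`-localizations by `h(m) = m − X·f̃(m)` on `P[X]` (the map `1 − fX`) is bijective. -/
theorem stmt2 (A : Type*) [CommRing A] (P : Type*) [AddCommGroup P] [Module A P]
    (f : P →ₗ[A] P) (S : Submonoid (Polynomial A))
    (hS : ∀ p ∈ S, p.Monic)
    (T : Submonoid (Polynomial A))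
    (hT : ∀ q, q ∈ T ↔ ∃ p ∈ S, p.reverse = q)
    (htors : ∃ p ∈ S, (Polynomial.aeval f p : P →ₗ[A] P) = 0)
    (h : PolynomialModule A P →ₗ[Polynomial A] PolynomialModule A P)
    (hh : ∀ m, h m = m - (X : A[X]) • (PolynomialModule.map A f m)) :
    Function.Bijective (LocalizedModule.map T h) := by
  obtain ⟨p, hpS, hp0⟩ := htors
  have hF : h = 1 - (X : A[X]) • Ftil A P f := by
    apply LinearMap.ext; intro m
    rw [hh m]
    simp only [LinearMap.sub_apply, LinearMap.smul_apply, Module.End.one_apply]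
    rfl
  obtain ⟨q, hq1, hq2⟩ := key A P f p hp0 h hF
  set r := p.reverse with hr
  have hrT : r ∈ T := (hT r).mpr ⟨p, hpS, rfl⟩
  have hc1 : ∀ m, h (q m) = r • m := by
    intro m
    have := DFunLike.congr_fun hq1 m
    simpa [Module.End.mul_apply, LinearMap.smul_apply, Module.End.one_apply] using this
  have hc2 : ∀ m, q (h m) = r • m := by
    intro m
    have := DFunLike.congr_fun hq2 m
    simpa [Module.End.mul_apply, LinearMap.smul_apply, Module.End.one_apply] using this
  have keyL : ∀ z, (LocalizedModule.map T q) ((LocalizedModule.map T h) z) = r • z := by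
    intro z
    induction z using LocalizedModule.induction_on with
    | _ x s =>
        rw [LocalizedModule.map_mk, LocalizedModule.map_mk, hc2 x, ← LocalizedModule.smul'_mk]
  have keyR : ∀ z, (LocalizedModule.map T h) ((LocalizedModule.map T q) z) = r • z := by
    intro z
    induction z using LocalizedModule.induction_on with
    | _ x s =>
        rw [LocalizedModule.map_mk, LocalizedModule.map_mk, hc1 x, ← LocalizedModule.smul'_mk]
  have hrbij : Function.Bijective
      (fun z : LocalizedModule T (PolynomialModule A P) => r • z) := by
    have hu := IsLocalizedModule.map_units
      (LocalizedModule.mkLinearMap T (PolynomialModule A P)) ⟨r, hrT⟩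
    exact (Module.End.isUnit_iff _).mp hu
  constructor
  · intro a b hab
    have : r • a = r • b := by rw [← keyL a, ← keyL b, hab]
    exact hrbij.injective this
  · intro z
    obtain ⟨w, hw⟩ := hrbij.surjective z
    exact ⟨LocalizedModule.map T q w, by rw [keyR w]; exact hw⟩
end

section
/- Let A be a commutative ring, P an A-module, and f : P → P an A-linear endomorphism. Then the A[X]-linear map h : P[X] → P[X], h(m) = m − X·f̃(m), is injective, and its cokernel is isomorphic as an A[X]-module to the localization of P_f at the submonoid of powers of X, equipped with the A[X]-module structure in which X acts as the inverse of the (invertible) localized action of X. -/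
open Polynomial

noncomputable section Stmt3Aux
variable {A : Type*} [CommRing A] {P : Type*} [AddCommGroup P] [Module A P]

abbrev stmt3S (A : Type*) [CommRing A] : Submonoid (Polynomial A) := Submonoid.powers (X : A[X])

def stmt3psi (A : Type*) [CommRing A] : A[X] →+* Localization (stmt3S A) :=
  Polynomial.eval₂RingHom
    ((algebraMap (Polynomial A) (Localization (stmt3S A))).comp Polynomial.C)
    (IsLocalization.mk' (Localization (stmt3S A)) (1 : Polynomial A)
      ⟨X, Submonoid.mem_powers X⟩)

lemma stmt3psi_X : stmt3psi A (X : A[X]) =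
    Localization.mk 1 ⟨X, Submonoid.mem_powers X⟩ := by
  rw [Localization.mk_eq_mk']; simp [stmt3psi]

lemma stmt3psi_C (a : A) : stmt3psi A (C a) =
    algebraMap (Polynomial A) (Localization (stmt3S A)) (C a) := by
  simp [stmt3psi]

def Stmt3T (f : P →ₗ[A] P) : Type _ := LocalizedModule (stmt3S A) (Module.AEval' f)

instance (f : P →ₗ[A] P) : AddCommGroup (Stmt3T f) :=
  inferInstanceAs (AddCommGroup (LocalizedModule (stmt3S A) (Module.AEval' f)))

instance (f : P →ₗ[A] P) : Module (Localization (stmt3S A)) (Stmt3T f) :=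
  inferInstanceAs (Module (Localization (stmt3S A)) (LocalizedModule (stmt3S A) (Module.AEval' f)))

instance (f : P →ₗ[A] P) : Module A[X] (Stmt3T f) :=
  Module.compHom _ (stmt3psi A)

lemma Stmt3T.smul_def (f : P →ₗ[A] P) (q : A[X]) (x : Stmt3T f) :
    q • x = (stmt3psi A q) • x := rfl

variable (f : P →ₗ[A] P)

lemma stmt3_mk_add_mk_same (M : Type*) [AddCommGroup M] [Module A[X] M]
    (s : stmt3S A) (m m' : M) :
    LocalizedModule.mk (S := stmt3S A) m s + LocalizedModule.mk m' s
      = LocalizedModule.mk (m + m') s := by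
  rw [LocalizedModule.mk_add_mk]
  have : s • m + s • m' = s • (m + m') := (smul_add _ _ _).symm
  rw [this, LocalizedModule.mk_cancel_common_left]

def stmt3mkHom (s : stmt3S A) : Module.AEval' f →+ Stmt3T f where
  toFun m := LocalizedModule.mk m s
  map_zero' := LocalizedModule.zero_mk s
  map_add' m m' := (stmt3_mk_add_mk_same _ s m m').symm

def stmt3phi : PolynomialModule A P →+ Stmt3T f :=
  (Finsupp.liftAddHom (fun i =>
    ((stmt3mkHom f ⟨X ^ i, pow_mem (Submonoid.mem_powers X) i⟩).comp
      (Module.AEval'.of f).toLinearMap.toAddMonoidHom))).comp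
    (PolynomialModule.coeffAddEquiv (R := A) (M := P)).toAddMonoidHom

lemma stmt3phi_single (i : ℕ) (p : P) :
    stmt3phi f (PolynomialModule.single A i p)
      = LocalizedModule.mk (Module.AEval'.of f p) ⟨X ^ i, pow_mem (Submonoid.mem_powers X) i⟩ :=
  Finsupp.liftAddHom_apply_single (fun i =>
      ((stmt3mkHom f ⟨X ^ i, pow_mem (Submonoid.mem_powers X) i⟩).comp
        (Module.AEval'.of f).toLinearMap.toAddMonoidHom)) i p

lemma stmt3_Xpow_smul_of (k : ℕ) (p : P) :
    ((X : A[X]) ^ k) • (Module.AEval'.of f p) = Module.AEval'.of f ((f ^ k) p) := by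
  induction k generalizing p with
  | zero => simp
  | succ n ih =>
    rw [pow_succ', mul_smul, ih p, Module.AEval'.X_smul_of]
    congr 1
    rw [pow_succ']
    rfl

lemma stmt3_denom_mul (i : ℕ) :
    (⟨X, Submonoid.mem_powers X⟩ * ⟨X ^ i, pow_mem (Submonoid.mem_powers X) i⟩ : stmt3S A)
      = ⟨X ^ (1 + i), pow_mem (Submonoid.mem_powers X) (1 + i)⟩ := by
  ext
  simp [pow_succ', add_comm 1 i]

lemma stmt3phi_X_smul (m : PolynomialModule A P) :
    stmt3phi f ((X : A[X]) • m) = stmt3psi A (X : A[X]) • stmt3phi f m := by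
  induction m using PolynomialModule.induction_linear with
  | zero => simp
  | add p q hp hq => rw [smul_add, map_add, hp, hq, map_add, smul_add]
  | single i p =>
    have hX : (X : A[X]) • PolynomialModule.single A i p
        = PolynomialModule.single A (1 + i) p := by
      rw [← Polynomial.monomial_one_one_eq_X, PolynomialModule.monomial_smul_single, one_smul]
    rw [hX, stmt3phi_single, stmt3phi_single, stmt3psi_X]
    erw [LocalizedModule.mk_smul_mk, one_smul, stmt3_denom_mul]

lemma stmt3phi_C_smul (a : A) (m : PolynomialModule A P) :
    stmt3phi f ((C a : A[X]) • m) = stmt3psi A (C a) • stmt3phi f m := by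
  induction m using PolynomialModule.induction_linear with
  | zero => simp
  | add p q hp hq => rw [smul_add, map_add, hp, hq, map_add, smul_add]
  | single i p =>
    have hC : (C a : A[X]) • PolynomialModule.single A i p
        = PolynomialModule.single A i (a • p) := by
      rw [← Polynomial.monomial_zero_left, PolynomialModule.monomial_smul_single, zero_add]
    rw [hC, stmt3phi_single, stmt3phi_single, stmt3psi_C, ← Localization.mk_one_eq_algebraMap]
    erw [LocalizedModule.mk_smul_mk, one_mul]
    congr 1
    rw [Module.AEval.C_smul, map_smul]

lemma stmt3phi_Xmapf (m : PolynomialModule A P) :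
    stmt3phi f ((X : A[X]) • (PolynomialModule.map A f m)) = stmt3phi f m := by
  induction m using PolynomialModule.induction_linear with
  | zero => simp
  | add p q hp hq => rw [map_add, smul_add, map_add, hp, hq, map_add]
  | single i p =>
    rw [PolynomialModule.map_single]
    have hX : (X : A[X]) • PolynomialModule.single A i (f p)
        = PolynomialModule.single A (1 + i) (f p) := by
      rw [← Polynomial.monomial_one_one_eq_X, PolynomialModule.monomial_smul_single, one_smul]
    have hnum : (Module.AEval'.of f) (f p)
        = (⟨X, Submonoid.mem_powers X⟩ : stmt3S A) • (Module.AEval'.of f p) := by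
      rw [Submonoid.smul_def, Module.AEval'.X_smul_of]
    rw [hX, stmt3phi_single, stmt3phi_single, ← stmt3_denom_mul, hnum]
    exact LocalizedModule.mk_cancel_common_left _ _ _

lemma stmt3phi_smul (q : A[X]) (m : PolynomialModule A P) :
    stmt3phi f (q • m) = stmt3psi A q • stmt3phi f m := by
  induction q using Polynomial.induction_on with
  | C a => exact stmt3phi_C_smul f a m
  | add p q hp hq => rw [add_smul, map_add, hp, hq, map_add, add_smul]
  | monomial n a ih =>
    have hq : (C a * X ^ (n + 1) : A[X]) = X * (C a * X ^ n) := by ring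
    rw [hq, mul_smul, stmt3phi_X_smul, ih]
    simp [map_mul, mul_smul]

/-- The comparison map as an `A[X]`-linear map into the twisted module. -/
def stmt3Phi : PolynomialModule A P →ₗ[A[X]] Stmt3T f where
  toFun := stmt3phi f
  map_add' := map_add _
  map_smul' q m := stmt3phi_smul f q m

/-- Partial evaluation sums. -/
def stmt3G (m : PolynomialModule A P) (j : ℕ) : P :=
  ∑ i ∈ Finset.range (j + 1), (f ^ (j - i)) (m.coeff i)

lemma stmt3G_zero (m : PolynomialModule A P) : stmt3G f m 0 = m.coeff 0 := by
  simp [stmt3G]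

lemma stmt3G_succ (m : PolynomialModule A P) (j : ℕ) :
    stmt3G f m (j + 1) = f (stmt3G f m j) + m.coeff (j + 1) := by
  unfold stmt3G
  rw [Finset.sum_range_succ, Nat.sub_self, pow_zero, Module.End.one_apply]
  congr 1
  rw [map_sum]
  refine Finset.sum_congr rfl fun i hi => ?_
  have hij : i < j + 1 := Finset.mem_range.mp hi
  have hsub : j + 1 - i = (j - i) + 1 := by omega
  rw [hsub, pow_succ']
  rfl

lemma stmt3G_shift (m : PolynomialModule A P) (n : ℕ) (hn : ∀ i, n ≤ i → m.coeff i = 0) (j : ℕ) :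
    stmt3G f m (n + j) = (f ^ j) (stmt3G f m n) := by
  induction j with
  | zero => simp
  | succ k ih =>
    rw [← Nat.add_assoc, stmt3G_succ, ih, hn (n + k + 1) (by omega), add_zero, pow_succ']
    rfl

lemma stmt3phi_eq_mk (m : PolynomialModule A P) (n : ℕ) (hn : ∀ i, n ≤ i → m.coeff i = 0) :
    stmt3phi f m = LocalizedModule.mk (Module.AEval'.of f (stmt3G f m n))
      ⟨X ^ n, pow_mem (Submonoid.mem_powers X) n⟩ := by
  have hm : m = ∑ i ∈ Finset.range n, PolynomialModule.single A i (m.coeff i) := by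
    refine PolynomialModule.coeff_injective (Finsupp.ext fun j => ?_)
    rw [PolynomialModule.coeff_sum, Finsupp.finset_sum_apply]
    rw [show (fun i => (PolynomialModule.single A i (m.coeff i)).coeff j)
        = fun i => if i = j then m.coeff i else 0 from funext fun i => by
          rw [PolynomialModule.coeff_single, Finsupp.single_apply]]
    rw [Finset.sum_ite_eq' (Finset.range n) j m.coeff]
    by_cases hj : j ∈ Finset.range n
    · rw [if_pos hj]
    · rw [if_neg hj]
      exact hn j (by simpa using hj)
  have hG : stmt3G f m n = ∑ i ∈ Finset.range n, (f ^ (n - i)) (m.coeff i) := by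
    unfold stmt3G
    rw [Finset.sum_range_succ, hn n le_rfl, map_zero, add_zero]
  conv_lhs => rw [hm]
  rw [map_sum, hG, map_sum]
  rw [show LocalizedModule.mk (S := stmt3S A)
        (∑ i ∈ Finset.range n, (Module.AEval'.of f) ((f ^ (n - i)) (m.coeff i)))
        ⟨X ^ n, pow_mem (Submonoid.mem_powers X) n⟩
      = ∑ i ∈ Finset.range n, LocalizedModule.mk
        ((Module.AEval'.of f) ((f ^ (n - i)) (m.coeff i)))
        ⟨X ^ n, pow_mem (Submonoid.mem_powers X) n⟩ from
    map_sum (stmt3mkHom f _) _ _]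
  refine Finset.sum_congr rfl fun i hi => ?_
  have hin : i ≤ n := le_of_lt (Finset.mem_range.mp hi)
  rw [stmt3phi_single, ← stmt3_Xpow_smul_of]
  have hd : (⟨X ^ n, pow_mem (Submonoid.mem_powers X) n⟩ : stmt3S A)
      = ⟨X ^ (n - i), pow_mem (Submonoid.mem_powers X) _⟩
        * ⟨X ^ i, pow_mem (Submonoid.mem_powers X) i⟩ := by
    have hni : n - i + i = n := Nat.sub_add_cancel hin
    ext
    rw [Submonoid.coe_mul, ← pow_add, hni]
  rw [hd]
  rw [show ((X : A[X]) ^ (n - i)) • (Module.AEval'.of f (m.coeff i))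
      = (⟨X ^ (n - i), pow_mem (Submonoid.mem_powers X) _⟩ : stmt3S A)
        • (Module.AEval'.of f (m.coeff i)) from rfl]
  exact (LocalizedModule.mk_cancel_common_left _ _ _).symm

lemma stmt3_X_map_coeff (u : PolynomialModule A P) (j : ℕ) :
    ((X : A[X]) • PolynomialModule.map A f u).coeff j
      = if 1 ≤ j then f (u.coeff (j - 1)) else 0 := by
  rw [← Polynomial.monomial_one_one_eq_X, PolynomialModule.monomial_smul_apply]
  simp [show ∀ i, (PolynomialModule.map A f u).coeff i = f (u.coeff i) from fun _ => rfl]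

lemma stmt3_map_apply (g : P →ₗ[A] P) (u : PolynomialModule A P) (i : ℕ) :
    (PolynomialModule.map A g u).coeff i = g (u.coeff i) := rfl

lemma stmt3_ker_sub (m : PolynomialModule A P) (hm : stmt3phi f m = 0) :
    ∃ u : PolynomialModule A P, u - (X : A[X]) • PolynomialModule.map A f u = m := by
  classical
  set n : ℕ := (m.coeff.support.sup id) + 1 with hn_def
  have hn : ∀ i, n ≤ i → m.coeff i = 0 := by
    intro i hi
    by_contra hne
    have hmem : i ∈ m.coeff.support := Finsupp.mem_support_iff.mpr hne
    have h2 : id i ≤ (m.coeff.support).sup id := Finset.le_sup hmem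
    have h3 : i < n := Nat.lt_succ_of_le h2
    omega
  rw [stmt3phi_eq_mk f m n hn] at hm
  erw [← LocalizedModule.zero_mk (1 : stmt3S A)] at hm
  obtain ⟨u, hu⟩ := LocalizedModule.mk_eq.mp hm
  simp only [one_smul, smul_zero] at hu
  obtain ⟨k, hk⟩ := u.2
  have hk' : (X : A[X]) ^ k = (u : A[X]) := hk
  have hfk : (f ^ k) (stmt3G f m n) = 0 := by
    have : ((X : A[X]) ^ k) • (Module.AEval'.of f (stmt3G f m n)) = 0 := by
      rw [← hu, Submonoid.smul_def, hk']
    rw [stmt3_Xpow_smul_of] at this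
    exact (Module.AEval'.of f).injective (by rw [this, map_zero])
  set N : ℕ := n + k with hN_def
  have hGN : stmt3G f m N = 0 := by
    rw [hN_def, stmt3G_shift f m n hn k, hfk]
  have hnN : ∀ i, N ≤ i → m.coeff i = 0 := fun i hi => hn i (by omega)
  have hGzero : ∀ j, N ≤ j → stmt3G f m j = 0 := by
    intro j hj
    have : j = N + (j - N) := by omega
    rw [this, stmt3G_shift f m N hnN, hGN, map_zero]
  refine ⟨PolynomialModule.ofCoeff A (Finsupp.onFinset (Finset.range N) (fun j => stmt3G f m j)
    (fun j hj => ?_)), ?_⟩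
  · by_contra hjN
    exact hj (hGzero j (by simpa using hjN))
  · refine PolynomialModule.coeff_injective (Finsupp.ext fun j => ?_)
    set u : PolynomialModule A P := PolynomialModule.ofCoeff A (Finsupp.onFinset (Finset.range N)
      (fun j => stmt3G f m j) (fun j hj => by
        by_contra hjN
        exact hj (hGzero j (by simpa using hjN)))) with hu_def
    have hu_apply : ∀ i, u.coeff i = stmt3G f m i := fun i => rfl
    have hXs := stmt3_X_map_coeff f u j
    show u.coeff j - ((X : A[X]) • PolynomialModule.map A f u).coeff j = m.coeff j
    rw [hXs]
    cases j with
    | zero => simp [hu_apply, stmt3G_zero]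
    | succ i =>
      rw [if_pos (by omega)]
      simp only [hu_apply, Nat.add_sub_cancel]
      rw [stmt3G_succ]
      abel

lemma stmt3_surj : Function.Surjective (stmt3phi f) := by
  intro x
  induction x using LocalizedModule.induction_on with
  | h p s =>
    obtain ⟨k, hk⟩ := s.2
    have hk' : (X : A[X]) ^ k = (s : A[X]) := hk
    refine ⟨PolynomialModule.single A k ((Module.AEval'.of f).symm p), ?_⟩
    rw [stmt3phi_single, LinearEquiv.apply_symm_apply]
    congr 1
    exact Subtype.ext hk'

end Stmt3Aux

/-- The map `h(m) = m − X·f̃(m)` on `P[X]` is injective, and its cokernel is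
isomorphic, as an `A[X]`-module, to the localization of `P_f` at the powers of `X` with `X`
acting as the inverse of the (invertible) localized action of `X`.  The twisted action of
`q ∈ A[X]` is encoded by the ring homomorphism `ψ : A[X] → A[X][1/X]` fixing `A` and
sending `X` to the inverse of `X`; the isomorphism is an additive bijection `e` satisfying
`e (q • m) = ψ(q) • e m`. -/
theorem stmt3 (A : Type*) [CommRing A] (P : Type*) [AddCommGroup P] [Module A P]
    (f : P →ₗ[A] P)
    (h : PolynomialModule A P →ₗ[Polynomial A] PolynomialModule A P)
    (hh : ∀ m, h m = m - (X : A[X]) • (PolynomialModule.map A f m)) :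
    Function.Injective h ∧
    ∃ e : (PolynomialModule A P ⧸ LinearMap.range h) ≃+
        LocalizedModule (Submonoid.powers (X : A[X])) (Module.AEval' f),
      ∀ (q : Polynomial A) (m : PolynomialModule A P ⧸ LinearMap.range h),
        e (q • m) =
          (Polynomial.eval₂RingHom
              ((algebraMap (Polynomial A)
                  (Localization (Submonoid.powers (X : A[X])))).comp Polynomial.C)
              (IsLocalization.mk' (Localization (Submonoid.powers (X : A[X])))
                (1 : Polynomial A) ⟨X, Submonoid.mem_powers X⟩) q) • e m := by
  have hinj : Function.Injective h := by
    refine (injective_iff_map_eq_zero h).mpr fun u hu => ?_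
    have h0 : u - (X : A[X]) • PolynomialModule.map A f u = 0 := by rw [← hh u, hu]
    have hrec : u = (X : A[X]) • PolynomialModule.map A f u := sub_eq_zero.mp h0
    have hcoef : ∀ j, u.coeff j = 0 := by
      intro j
      induction j with
      | zero =>
        have := congrArg (fun w : PolynomialModule A P => w.coeff 0) hrec
        simpa [stmt3_X_map_coeff] using this
      | succ i ih =>
        have := congrArg (fun w : PolynomialModule A P => w.coeff (i + 1)) hrec
        simp only [stmt3_X_map_coeff, Nat.add_sub_cancel, if_pos (by omega : 1 ≤ i + 1)] at this
        rw [this, ih, map_zero]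
    exact PolynomialModule.coeff_injective (Finsupp.ext hcoef)
  refine ⟨hinj, ?_⟩
  have hker : LinearMap.range h = LinearMap.ker (stmt3Phi f) := by
    ext m
    constructor
    · rintro ⟨v, rfl⟩
      show stmt3phi f (h v) = 0
      rw [hh v, map_sub, stmt3phi_Xmapf, sub_self]
    · intro hm
      obtain ⟨v, hv⟩ := stmt3_ker_sub f m hm
      exact ⟨v, by rw [hh v]; exact hv⟩
  have hsurj : Function.Surjective (stmt3Phi f) := stmt3_surj f
  let e₀ : (PolynomialModule A P ⧸ LinearMap.range h) ≃ₗ[A[X]] Stmt3T f :=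
    (Submodule.quotEquivOfEq _ _ hker).trans
      (LinearMap.quotKerEquivOfSurjective (stmt3Phi f) hsurj)
  exact ⟨e₀.toAddEquiv, fun q m => e₀.map_smul q m⟩
end

section
/- Let A be a commutative ring and P a finitely generated projective A-module. Then the A-linear map P ⊗_A A[[X]] → (ℕ → P) determined by sending p ⊗ g to the sequence (n ↦ (coefficient of Xⁿ in g) • p) is bijective. (That is, P ⊗_A A[[X]] ≅ ∏_{n=0}^∞ P for finitely generated projective P.) -/
open TensorProduct

/-- The canonical map `M ⊗ A[[X]] → (ℕ → M)`. -/
noncomputable def canMap (A : Type*) [CommRing A] (M : Type*) [AddCommGroup M] [Module A M] :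
    TensorProduct A M (PowerSeries A) →ₗ[A] (ℕ → M) :=
  TensorProduct.lift
    (LinearMap.mk₂ A (fun m g n => PowerSeries.coeff (R := A) n g • m)
      (fun m m' g => by funext n; simp [smul_add])
      (fun a m g => by funext n; exact smul_comm _ _ _)
      (fun m g g' => by funext n; simp [add_smul])
      (fun a m g => by funext n; simp [mul_smul]))

@[simp] lemma canMap_tmul (A : Type*) [CommRing A] (M : Type*) [AddCommGroup M] [Module A M]
    (m : M) (g : PowerSeries A) (n : ℕ) :
    canMap A M (m ⊗ₜ[A] g) n = PowerSeries.coeff (R := A) n g • m := rfl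

lemma canMap_natural {A : Type*} [CommRing A] {M N : Type*} [AddCommGroup M] [Module A M]
    [AddCommGroup N] [Module A N] (u : M →ₗ[A] N) :
    (u.compLeft ℕ) ∘ₗ canMap A M = canMap A N ∘ₗ (u.rTensor (PowerSeries A)) := by
  apply TensorProduct.ext'
  intro m g
  funext n
  simp [LinearMap.compLeft_apply]

/-- Inverse in the free case. -/
noncomputable def canInv (A : Type*) [CommRing A] (k : ℕ) :
    (ℕ → (Fin k → A)) →ₗ[A] TensorProduct A (Fin k → A) (PowerSeries A) where
  toFun f := ∑ i : Fin k, (Pi.single i 1) ⊗ₜ[A] (PowerSeries.mk fun n => f n i)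
  map_add' f g := by
    have h : ∀ i : Fin k, (PowerSeries.mk fun n => (f + g) n i)
        = (PowerSeries.mk fun n => f n i) + (PowerSeries.mk fun n => g n i) := by
      intro i; ext n; simp
    simp only [h, TensorProduct.tmul_add, Finset.sum_add_distrib]
  map_smul' a f := by
    have h : ∀ i : Fin k, (PowerSeries.mk fun n => (a • f) n i)
        = a • (PowerSeries.mk fun n => f n i) := by
      intro i; ext n; simp
    simp only [h, TensorProduct.tmul_smul, ← Finset.smul_sum, RingHom.id_apply]

lemma canMap_free_bijective (A : Type*) [CommRing A] (k : ℕ) :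
    Function.Bijective (canMap A (Fin k → A)) := by
  have hright : ∀ f, canMap A (Fin k → A) (canInv A k f) = f := by
    intro f
    funext n
    simp only [canInv, LinearMap.coe_mk, AddHom.coe_mk, map_sum]
    rw [Finset.sum_apply]
    simp only [canMap_tmul, PowerSeries.coeff_mk]
    have : ∀ i : Fin k, f n i • (Pi.single i 1 : Fin k → A) = Pi.single i (f n i) := by
      intro i
      ext j
      by_cases h : j = i <;> simp [Pi.single_apply, h]
    simp only [this]
    exact Finset.univ_sum_single (f n)
  have hleft : ∀ x, canInv A k (canMap A (Fin k → A) x) = x := by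
    intro x
    induction x with
    | zero => rw [LinearMap.map_zero, LinearMap.map_zero]
    | tmul v g =>
      simp only [canInv, LinearMap.coe_mk, AddHom.coe_mk, canMap_tmul]
      have : ∀ i : Fin k, (PowerSeries.mk fun n => (PowerSeries.coeff (R := A) n g • v) i)
          = v i • g := by
        intro i
        ext n
        simp [mul_comm]
      simp only [this]
      calc ∑ i : Fin k, (Pi.single i (1:A)) ⊗ₜ[A] (v i • g)
          = ∑ i : Fin k, (Pi.single i (v i)) ⊗ₜ[A] g := by
            refine Finset.sum_congr rfl fun i _ => ?_
            rw [TensorProduct.tmul_smul, TensorProduct.smul_tmul']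
            congr 1
            ext j
            by_cases h : j = i <;> simp [Pi.single_apply, h]
        _ = v ⊗ₜ[A] g := by rw [← TensorProduct.sum_tmul, Finset.univ_sum_single]
    | add x y hx hy => simp [map_add, hx, hy]
  exact ⟨fun x y h => by rw [← hleft x, ← hleft y, h],
    fun f => ⟨canInv A k f, hright f⟩⟩

/-- For a finitely generated projective module `P` over a commutative ring `A`,
the `A`-linear map `P ⊗[A] A[[X]] → (ℕ → P)` sending `p ⊗ g` to `n ↦ (coeff Xⁿ g) • p`
is bijective, i.e. `P ⊗ A[[X]] ≅ ∏_{n ≥ 0} P`. -/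
theorem stmt5 (A : Type*) [CommRing A] (P : Type*) [AddCommGroup P] [Module A P]
    [Module.Finite A P] [Module.Projective A P]
    (Φ : TensorProduct A P (PowerSeries A) →ₗ[A] (ℕ → P))
    (hΦ : ∀ (p : P) (g : PowerSeries A) (n : ℕ),
      Φ (p ⊗ₜ[A] g) n = (PowerSeries.coeff (R := A) n g) • p) :
    Function.Bijective Φ := by
  have hΦ' : Φ = canMap A P := TensorProduct.ext' fun p g => by
    funext n; rw [hΦ, canMap_tmul]
  subst hΦ'
  obtain ⟨k, π, hπ⟩ := Module.Finite.exists_fin' A P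
  obtain ⟨s, hs⟩ := π.exists_rightInverse_of_surjective (LinearMap.range_eq_top.2 hπ)
  have hsi : ∀ p : P, π (s p) = p := fun p => congrArg (· p) (congrArg DFunLike.coe hs)
  have hnatπ := canMap_natural (A := A) π
  have hnats := canMap_natural (A := A) s
  have hfree := canMap_free_bijective A k
  constructor
  · intro x y hxy
    have h1 : canMap A (Fin k → A) (s.rTensor (PowerSeries A) x)
        = canMap A (Fin k → A) (s.rTensor (PowerSeries A) y) := by
      have := congrArg (fun F => F x) hnats.symm
      have h2 := congrArg (fun F => F y) hnats.symm
      simp only [LinearMap.comp_apply] at this h2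
      rw [this, h2, hxy]
    have h3 := hfree.1 h1
    have h4 := congrArg (π.rTensor (PowerSeries A)) h3
    rwa [← LinearMap.comp_apply, ← LinearMap.comp_apply, ← LinearMap.rTensor_comp,
      hs, LinearMap.rTensor_id, LinearMap.id_apply, LinearMap.id_apply] at h4
  · intro f
    obtain ⟨y, hy⟩ := hfree.2 (fun n => s (f n))
    refine ⟨π.rTensor (PowerSeries A) y, ?_⟩
    have := congrArg (fun F => F y) hnatπ
    simp only [LinearMap.comp_apply] at this
    rw [← this, hy]
    funext n
    simp [LinearMap.compLeft_apply, hsi]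
end

section
/- Let A be a commutative ring, S ⊆ A[t] a submonoid all of whose elements are monic polynomials, and X a bounded chain complex of finitely generated projective A[t]-modules. The following are equivalent: (1) there exists p ∈ S such that the chain map p·id_X is A[t]-linearly chain homotopic to zero; (2) there exists p ∈ S such that the underlying map of complexes of A-modules of p·id_X is chain homotopic to zero through A-linear chain homotopies; (3) there exists p ∈ S such that p·H_q(X) = 0 for all q; (4) there exists p ∈ S such that the localization of H_q(X) at the submonoid of powers of p vanishes for all q. -/
open CategoryTheory Limits

universe u

/-- Multiplication by a ring element `p` on a module over a commutative ring. -/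
def smulHom {R : Type u} [CommRing R] (M : ModuleCat.{u} R) (p : R) : M ⟶ M := ModuleCat.ofHom
  { toFun := fun x => p • x
    map_add' := fun x y => smul_add p x y
    map_smul' := fun r x => by
      show p • (r • x) = r • (p • x)
      rw [smul_smul, smul_smul, mul_comm] }

/-- The chain map `p · id_X` given by multiplication by `p` in each degree. -/
def smulChain {R : Type u} [CommRing R] (X : ChainComplex (ModuleCat.{u} R) ℤ) (p : R) :
    X ⟶ X where
  f i := smulHom (X.X i) p
  comm' i j _ := by
    ext x
    show (X.d i j).hom (p • x) = p • (X.d i j).hom x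
    exact (X.d i j).hom.map_smul p x

instance restrictScalarsAdditive {R : Type u} {S : Type u} [Ring R] [Ring S] (f : R →+* S) :
    (ModuleCat.restrictScalars.{u} f).Additive where
  map_add := ModuleCat.hom_ext (LinearMap.ext fun _ => rfl)

section Aux
variable {R : Type u} [CommRing R] (X : ChainComplex (ModuleCat.{u} R) ℤ) (q : ℤ)


lemma next_down (q : ℤ) : (ComplexShape.down ℤ).next q = q - 1 :=
  (ComplexShape.down ℤ).next_eq' (by simp)

lemma prev_down (q : ℤ) : (ComplexShape.down ℤ).prev q = q + 1 :=
  (ComplexShape.down ℤ).prev_eq' (by simp)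

lemma mem_ker_iff (z : X.X q) : (X.sc q).g z = 0 ↔ X.d q (q - 1) z = 0 := by
  show X.d q ((ComplexShape.down ℤ).next q) z = 0 ↔ _
  rw [next_down]

lemma range_prev_iff (z : X.X q) :
    (∃ w : (X.sc q).X₁, (X.sc q).f w = z) ↔ z ∈ LinearMap.range (X.d (q + 1) q).hom := by
  show (∃ w : X.X ((ComplexShape.down ℤ).prev q),
      X.d ((ComplexShape.down ℤ).prev q) q w = z) ↔ _
  rw [prev_down]
  exact LinearMap.mem_range.symm

noncomputable def Hmk (z : X.X q) (hz : X.d q (q - 1) z = 0) : X.homology q :=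
  (X.sc q).moduleCatHomologyIso.inv
    ((LinearMap.range (X.sc q).moduleCatToCycles).mkQ ⟨z, (mem_ker_iff X q z).mpr hz⟩)

lemma Hmk_smul (r : R) (z : X.X q) (hz : X.d q (q - 1) z = 0) :
    r • Hmk X q z hz = Hmk X q (r • z) (by rw [map_smul, hz, smul_zero]) := by
  show r • ((X.sc q).moduleCatHomologyIso.inv ((LinearMap.range (X.sc q).moduleCatToCycles).mkQ _)) = _
  exact (map_smul (ConcreteCategory.hom (X.sc q).moduleCatHomologyIso.inv) r
    ((LinearMap.range (X.sc q).moduleCatToCycles).mkQ ⟨z, (mem_ker_iff X q z).mpr hz⟩)).symm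

private lemma invhom (y : (X.sc q).moduleCatLeftHomologyData.H) :
    (X.sc q).moduleCatHomologyIso.hom ((X.sc q).moduleCatHomologyIso.inv y) = y := by
  have : ((X.sc q).moduleCatHomologyIso.inv ≫ (X.sc q).moduleCatHomologyIso.hom) y
      = (𝟙 ((X.sc q).moduleCatLeftHomologyData.H)) y := by rw [Iso.inv_hom_id]
  exact this

private lemma hominv (y : (X.sc q).homology) :
    (X.sc q).moduleCatHomologyIso.inv ((X.sc q).moduleCatHomologyIso.hom y) = y := by
  have : ((X.sc q).moduleCatHomologyIso.hom ≫ (X.sc q).moduleCatHomologyIso.inv) y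
      = (𝟙 ((X.sc q).homology)) y := by rw [Iso.hom_inv_id]
  exact this

lemma Hmk_surjective (x : X.homology q) : ∃ z hz, Hmk X q z hz = x := by
  obtain ⟨c, hc⟩ := Submodule.mkQ_surjective _ ((X.sc q).moduleCatHomologyIso.hom x)
  refine ⟨c.1, (mem_ker_iff X q c.1).mp c.2, ?_⟩
  show (X.sc q).moduleCatHomologyIso.inv ((LinearMap.range (X.sc q).moduleCatToCycles).mkQ _) = x
  have h2 : ((LinearMap.range (X.sc q).moduleCatToCycles).mkQ
      (⟨c.1, (mem_ker_iff X q c.1).mpr ((mem_ker_iff X q c.1).mp c.2)⟩ :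
        LinearMap.ker (X.sc q).g.hom)) = (X.sc q).moduleCatHomologyIso.hom x := by
    rw [show (⟨c.1, (mem_ker_iff X q c.1).mpr ((mem_ker_iff X q c.1).mp c.2)⟩ :
        LinearMap.ker (X.sc q).g.hom) = c from Subtype.ext rfl]
    exact hc
  rw [h2]
  exact hominv X q x

lemma pi_eq_zero_iff (z : X.X q) (hz : X.d q (q - 1) z = 0) :
    (LinearMap.range (X.sc q).moduleCatToCycles).mkQ ⟨z, (mem_ker_iff X q z).mpr hz⟩ = 0 ↔
      z ∈ LinearMap.range (X.d (q + 1) q).hom := by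
  show (LinearMap.range (X.sc q).moduleCatToCycles).mkQ _ = 0 ↔ _
  rw [Submodule.mkQ_apply, Submodule.Quotient.mk_eq_zero]
  constructor
  · rintro ⟨w, hw⟩
    exact (range_prev_iff X q z).mp ⟨w, congrArg Subtype.val hw⟩
  · intro h
    obtain ⟨w', hw'⟩ := (range_prev_iff X q z).mpr h
    exact ⟨w', Subtype.ext hw'⟩

lemma Hmk_eq_zero_iff (z : X.X q) (hz : X.d q (q - 1) z = 0) :
    Hmk X q z hz = 0 ↔ z ∈ LinearMap.range (X.d (q + 1) q).hom := by
  rw [← pi_eq_zero_iff X q z hz]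
  constructor
  · intro h
    have h' : (X.sc q).moduleCatHomologyIso.inv
        ((LinearMap.range (X.sc q).moduleCatToCycles).mkQ ⟨z, (mem_ker_iff X q z).mpr hz⟩) = 0 := h
    have := congrArg (X.sc q).moduleCatHomologyIso.hom h'
    exact (invhom X q _).symm.trans (this.trans (map_zero _))
  · intro h
    show (X.sc q).moduleCatHomologyIso.inv _ = 0
    rw [h]
    exact map_zero _


lemma smulChain_comp (p p' : R) :
    smulChain X p ≫ smulChain X p' = smulChain X (p * p') := by
  ext i x
  show p' • (p • x) = (p * p') • x
  rw [smul_smul, mul_comm]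

lemma uniform_torsion {M N : ModuleCat.{u} R} [Module.Finite R M]
    (p : R) (f : M ⟶ N) (B : Submodule R N)
    (h : ∀ x : M, ∃ n : ℕ, p ^ n • f x ∈ B) :
    ∃ n : ℕ, ∀ x : M, p ^ n • f x ∈ B := by
  obtain ⟨k, s, hs⟩ := Module.Finite.exists_fin (R := R) (M := M)
  choose n hn using fun j => h (s j)
  set N0 := (Finset.univ : Finset (Fin k)).sup n with hN0
  refine ⟨N0, fun x => ?_⟩
  have hx : x ∈ Submodule.span R (Set.range s) := hs ▸ Submodule.mem_top
  induction hx using Submodule.span_induction with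
  | mem x hxs =>
      obtain ⟨j, rfl⟩ := hxs
      have hle : n j ≤ N0 := Finset.le_sup (Finset.mem_univ j)
      have : p ^ N0 • f (s j) = p ^ (N0 - n j) • (p ^ (n j) • f (s j)) := by
        rw [smul_smul, ← pow_add, Nat.sub_add_cancel hle]
      rw [this]
      exact B.smul_mem _ (hn j)
  | zero => rw [map_zero, smul_zero]; exact B.zero_mem
  | add x y hx hy ihx ihy => rw [map_add, smul_add]; exact B.add_mem ihx ihy
  | smul a x hx ihx =>
      rw [map_smul, smul_comm]
      exact B.smul_mem _ ihx


open HomologicalComplex in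
lemma key_s13 (a : ℤ) (ha : ∀ i, i < a → Limits.IsZero (X.X i))
    (hfg : ∀ i, Module.Finite R (X.X i)) (hproj : ∀ i, Module.Projective R (X.X i))
    (p : R)
    (htor : ∀ (q : ℤ) (z : X.X q), X.d q (q - 1) z = 0 →
       ∃ n : ℕ, p ^ n • z ∈ LinearMap.range (X.d (q + 1) q).hom) :
    ∀ k : ℕ, ∃ (N : ℕ) (g : X ⟶ X), Nonempty (Homotopy (smulChain X (p ^ N)) g)
       ∧ ∀ i, i < a + k → g.f i = 0 := by
  intro k
  induction k with
  | zero =>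
      exact ⟨0, smulChain X (p ^ 0), ⟨Homotopy.refl _⟩,
        fun i hi => (ha i (by simpa using hi)).eq_of_src _ _⟩
  | succ k ih =>
      obtain ⟨N, g, ⟨H⟩, hg⟩ := ih
      set m : ℤ := a + k with hm
      have hcyc : ∀ x : X.X m, X.d m (m - 1) (g.f m x) = 0 := by
        intro x
        have hcomm := g.comm m (m - 1)
        have : X.d m (m - 1) (g.f m x) = g.f (m - 1) (X.d m (m - 1) x) :=
          congrFun (congrArg (fun (l : X.X m ⟶ X.X (m - 1)) => (l : X.X m → X.X (m - 1))) hcomm) x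
        rw [this, hg (m - 1) (by omega)]
        rfl
      haveI := hfg m
      obtain ⟨n, hn⟩ := uniform_torsion p (g.f m) (LinearMap.range (X.d (m + 1) m).hom)
        (fun x => htor m (g.f m x) (hcyc x))
      set u : X ⟶ X := g ≫ smulChain X (p ^ n) with hu
      have hu0 : ∀ i, i < m → u.f i = 0 := by
        intro i hi
        rw [hu, comp_f, hg i hi, Limits.zero_comp]
      have humem : ∀ x : X.X m, u.f m x ∈ LinearMap.range (X.d (m + 1) m).hom := fun x => hn x
      haveI := hproj m
      obtain ⟨h', hh'⟩ := Module.projective_lifting_property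
          ((X.d (m + 1) m).hom.rangeRestrict)
          (LinearMap.codRestrict _ (u.f m).hom humem)
          (LinearMap.surjective_rangeRestrict _)
      have hlift : ∀ x, X.d (m + 1) m (h' x) = u.f m x :=
        fun x => congrArg Subtype.val (LinearMap.congr_fun hh' x)
      let homf : ∀ i j, (ComplexShape.down ℤ).Rel j i → (X.X i ⟶ X.X j) := fun i j hrel =>
        if hi : i = m then
          (eqToHom (congrArg X.X hi)) ≫ (ModuleCat.ofHom h' : X.X m ⟶ X.X (m + 1)) ≫
            (eqToHom (congrArg X.X (show m + 1 = j by
              rw [← hi]; exact hrel)))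
        else 0
      set ν : X ⟶ X := Homotopy.nullHomotopicMap' homf with hν
      have hνf : ∀ i : ℤ, ν.f i = X.d i (i - 1) ≫ homf (i - 1) i (by simp) +
          homf i (i + 1) (by simp) ≫ X.d (i + 1) i := by
        intro i
        exact Homotopy.nullHomotopicMap'_f (show (ComplexShape.down ℤ).Rel (i+1) i by simp)
          (show (ComplexShape.down ℤ).Rel i (i-1) by simp) homf
      set g' : X ⟶ X := u - ν with hg'
      have H2 : Homotopy (smulChain X (p ^ (N + n))) g' := by
        refine (Homotopy.ofEq ?_).trans ((H.compRight (smulChain X (p ^ n))).trans ?_)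
        · rw [smulChain_comp, ← pow_add]
        · refine (Homotopy.ofEq (show g ≫ smulChain X (p ^ n) = g' + ν by
            rw [hg', sub_add_cancel])).trans
            (((Homotopy.refl g').add (Homotopy.nullHomotopy' homf)).trans
              (Homotopy.ofEq (add_zero g')))
      refine ⟨N + n, g', ⟨H2⟩, ?_⟩
      intro i hi
      have hi' : i ≤ m := by push_cast at hi; omega
      rw [hg', sub_f_apply, hνf i]
      rcases lt_or_eq_of_le hi' with hlt | rfl
      · have h1 : homf (i - 1) i (by simp) = 0 := dif_neg (by omega)
        have h2 : homf i (i + 1) (by simp) = 0 := dif_neg (by omega)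
        rw [hu0 i hlt, h1, h2]
        simp
      · have h1 : homf (m - 1) m (by simp) = 0 := dif_neg (by omega)
        have h2 : homf m (m + 1) (by simp) = (ModuleCat.ofHom h' : X.X m ⟶ X.X (m + 1)) := by
          have heq : homf m (m + 1) (by simp) =
              (eqToHom (congrArg X.X (rfl : m = m))) ≫ (ModuleCat.ofHom h' : X.X m ⟶ X.X (m + 1)) ≫
                (eqToHom (congrArg X.X (rfl : (m + 1 : ℤ) = m + 1))) := dif_pos rfl
          rw [heq]
          simp
        rw [h1, h2]
        have hcomp : (ModuleCat.ofHom h' : X.X m ⟶ X.X (m + 1)) ≫ X.d (m + 1) m = u.f m := by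
          ext x
          exact hlift x
        rw [hcomp]
        simp

open HomologicalComplex in
lemma contract (a b : ℤ) (hab : ∀ i, (i < a ∨ b < i) → Limits.IsZero (X.X i))
    (hfg : ∀ i, Module.Finite R (X.X i)) (hproj : ∀ i, Module.Projective R (X.X i))
    (p : R)
    (htor : ∀ (q : ℤ) (z : X.X q), X.d q (q - 1) z = 0 →
       ∃ n : ℕ, p ^ n • z ∈ LinearMap.range (X.d (q + 1) q).hom) :
    ∃ N : ℕ, Nonempty (Homotopy (smulChain X (p ^ N)) 0) := by
  obtain ⟨N, g, ⟨H⟩, hg⟩ := key_s13 X a (fun i hi => hab i (Or.inl hi)) hfg hproj p htor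
    ((b + 1 - a).toNat)
  have hg0 : g = 0 := by
    have hf0 : ∀ i, g.f i = 0 := by
      intro i
      by_cases hi : i < a + ((b + 1 - a).toNat : ℤ)
      · exact hg i hi
      · refine (hab i (Or.inr ?_)).eq_of_src _ _
        have := Int.self_le_toNat (b + 1 - a)
        omega
    ext i x
    rw [hf0 i]
    rfl
  exact ⟨N, ⟨H.trans (Homotopy.ofEq hg0)⟩⟩

lemma two_to_cycle {A : Type u} [CommRing A]
    (X : ChainComplex (ModuleCat.{u} (Polynomial A)) ℤ) (p : Polynomial A)
    (H : Homotopy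
      (((ModuleCat.restrictScalars.{u} (algebraMap A (Polynomial A))).mapHomologicalComplex
        (ComplexShape.down ℤ)).map (smulChain X p)) 0)
    (q : ℤ) (z : X.X q) (hz : X.d q (q - 1) z = 0) :
    p • z ∈ LinearMap.range (X.d (q + 1) q).hom := by
  set Y := ((ModuleCat.restrictScalars.{u} (algebraMap A (Polynomial A))).mapHomologicalComplex
      (ComplexShape.down ℤ)).obj X with hY
  have hc := H.comm q
  rw [dNext_eq H.hom (show (ComplexShape.down ℤ).Rel q (q - 1) by simp),
      prevD_eq H.hom (show (ComplexShape.down ℤ).Rel (q + 1) q by simp),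
      HomologicalComplex.zero_f_apply, add_zero] at hc
  refine ⟨H.hom q (q + 1) (show ↑(Y.X q) from z), ?_⟩
  have he := ConcreteCategory.congr_hom hc (show ↑(Y.X q) from z)
  have hA : (Y.d q (q - 1) ≫ H.hom (q - 1) q) (show ↑(Y.X q) from z) = 0 := by
    have h0 : Y.d q (q - 1) (show ↑(Y.X q) from z) = (0 : ↑(Y.X (q - 1))) := hz
    show H.hom (q - 1) q (Y.d q (q - 1) (show ↑(Y.X q) from z)) = 0
    rw [h0, map_zero]
  change _ = (Y.d q (q - 1) ≫ H.hom (q - 1) q) (show ↑(Y.X q) from z) +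
    (H.hom q (q + 1) ≫ Y.d (q + 1) q) (show ↑(Y.X q) from z) at he
  rw [hA, zero_add] at he
  exact he.symm

end Aux

/-- For a bounded complex `X` of finitely generated projective `A[t]`-modules
and a submonoid `S ⊆ A[t]` of monic polynomials, the following are equivalent:
(1) some `p ∈ S` has `p·id_X` chain homotopic to zero `A[t]`-linearly;
(2) some `p ∈ S` has the underlying `A`-linear map of `p·id_X` chain homotopic to zero
through `A`-linear homotopies;
(3) some `p ∈ S` kills all homology of `X`;
(4) for some `p ∈ S` the localization of all homology of `X` at the powers of `p` vanishes. -/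
theorem stmt13 (A : Type u) [CommRing A] (S : Submonoid (Polynomial A))
    (hS : ∀ p ∈ S, p.Monic)
    (X : ChainComplex (ModuleCat.{u} (Polynomial A)) ℤ)
    (hbdd : ∃ a b : ℤ, ∀ i, (i < a ∨ b < i) → IsZero (X.X i))
    (hfg : ∀ i, Module.Finite (Polynomial A) (X.X i) ∧
      Module.Projective (Polynomial A) (X.X i)) :
    ((∃ p ∈ S, Nonempty (Homotopy (smulChain X p) 0)) ↔
      (∃ p ∈ S, Nonempty (Homotopy
        (((ModuleCat.restrictScalars.{u} (algebraMap A (Polynomial A))).mapHomologicalComplex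
          (ComplexShape.down ℤ)).map (smulChain X p)) 0))) ∧
    ((∃ p ∈ S, Nonempty (Homotopy
        (((ModuleCat.restrictScalars.{u} (algebraMap A (Polynomial A))).mapHomologicalComplex
          (ComplexShape.down ℤ)).map (smulChain X p)) 0)) ↔
      (∃ p ∈ S, ∀ (q : ℤ) (x : X.homology q), p • x = 0)) ∧
    ((∃ p ∈ S, ∀ (q : ℤ) (x : X.homology q), p • x = 0) ↔
      (∃ p ∈ S, ∀ q : ℤ,
        Subsingleton (LocalizedModule (Submonoid.powers p) (X.homology q)))) := by
  obtain ⟨a, b, hab⟩ := hbdd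
  have hfin : ∀ i, Module.Finite (Polynomial A) (X.X i) := fun i => (hfg i).1
  have hproj : ∀ i, Module.Projective (Polynomial A) (X.X i) := fun i => (hfg i).2
  have i12 : (∃ p ∈ S, Nonempty (Homotopy (smulChain X p) 0)) →
      (∃ p ∈ S, Nonempty (Homotopy
        (((ModuleCat.restrictScalars.{u} (algebraMap A (Polynomial A))).mapHomologicalComplex
          (ComplexShape.down ℤ)).map (smulChain X p)) 0)) := by
    rintro ⟨p, hp, ⟨H⟩⟩
    exact ⟨p, hp,
      ⟨((ModuleCat.restrictScalars.{u}
          (algebraMap A (Polynomial A))).mapHomotopy H).trans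
        (Homotopy.ofEq (Functor.map_zero _ _ _))⟩⟩
  have i23 : (∃ p ∈ S, Nonempty (Homotopy
        (((ModuleCat.restrictScalars.{u} (algebraMap A (Polynomial A))).mapHomologicalComplex
          (ComplexShape.down ℤ)).map (smulChain X p)) 0)) →
      (∃ p ∈ S, ∀ (q : ℤ) (x : X.homology q), p • x = 0) := by
    rintro ⟨p, hp, ⟨H⟩⟩
    refine ⟨p, hp, fun q x => ?_⟩
    obtain ⟨z, hz, rfl⟩ := Hmk_surjective X q x
    rw [Hmk_smul]
    exact (Hmk_eq_zero_iff X q _ _).mpr (two_to_cycle X p H q z hz)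
  have i34 : (∃ p ∈ S, ∀ (q : ℤ) (x : X.homology q), p • x = 0) →
      (∃ p ∈ S, ∀ q : ℤ,
        Subsingleton (LocalizedModule (Submonoid.powers p) (X.homology q))) := by
    rintro ⟨p, hp, h3⟩
    refine ⟨p, hp, fun q => ⟨fun x y => ?_⟩⟩
    induction x, y using LocalizedModule.induction_on₂ with
    | h m m' s s' =>
      rw [LocalizedModule.mk_eq]
      refine ⟨⟨p, Submonoid.mem_powers p⟩, ?_⟩
      have h1 : (⟨p, Submonoid.mem_powers p⟩ : Submonoid.powers p) • (s' • m) = 0 := h3 q _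
      have h2 : (⟨p, Submonoid.mem_powers p⟩ : Submonoid.powers p) • (s • m') = 0 := h3 q _
      rw [h1, h2]
  have i41 : (∃ p ∈ S, ∀ q : ℤ,
        Subsingleton (LocalizedModule (Submonoid.powers p) (X.homology q))) →
      (∃ p ∈ S, Nonempty (Homotopy (smulChain X p) 0)) := by
    rintro ⟨p, hp, h4⟩
    have htor : ∀ (q : ℤ) (z : X.X q), X.d q (q - 1) z = 0 →
        ∃ n : ℕ, p ^ n • z ∈ LinearMap.range (X.d (q + 1) q).hom := by
      intro q z hz
      haveI := h4 q
      have h0 : (LocalizedModule.mk (Hmk X q z hz) (1 : Submonoid.powers p)) =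
          LocalizedModule.mk 0 (1 : Submonoid.powers p) := Subsingleton.elim _ _
      rw [LocalizedModule.mk_eq] at h0
      obtain ⟨u, hu⟩ := h0
      obtain ⟨n, hn⟩ := u.2
      have hn' : p ^ n = (u : Polynomial A) := hn
      refine ⟨n, ?_⟩
      rw [← Hmk_eq_zero_iff X q (p ^ n • z) (by rw [map_smul, hz, smul_zero]),
        ← Hmk_smul X q (p ^ n) z hz]
      have : u • Hmk X q z hz = 0 := by simpa using hu
      calc p ^ n • Hmk X q z hz = (u : Polynomial A) • Hmk X q z hz := by rw [hn']
        _ = u • Hmk X q z hz := rfl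
        _ = 0 := this
    obtain ⟨N, ⟨H⟩⟩ := contract X a b hab hfin hproj p htor
    exact ⟨p ^ N, pow_mem hp N, ⟨H⟩⟩
  exact ⟨⟨i12, fun h2 => i41 (i34 (i23 h2))⟩,
    ⟨i23, fun h3 => i12 (i41 (i34 h3))⟩,
    ⟨i34, fun h4 => i23 (i12 (i41 h4))⟩⟩
end

section
/- Let A be a commutative ring and T ⊆ A[X] a submonoid of the multiplicative monoid of A[X] each of whose elements has constant coefficient 1. Then every element of T is a non-zero-divisor in A[X], the image of every element of T in the formal power series ring A[[X]] is a unit, and the induced ring homomorphism from the localization T⁻¹A[X] to A[[X]] is injective. -/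
open Polynomial

/-- If `T ⊆ A[X]` is a submonoid all of whose elements have constant
coefficient `1`, then every element of `T` is a non-zero-divisor in `A[X]`, the image of
every element of `T` in `A[[X]]` is a unit, and the induced ring homomorphism
`T⁻¹A[X] → A[[X]]` is injective. -/
theorem stmt18 (A : Type*) [CommRing A] (T : Submonoid (Polynomial A))
    (hT : ∀ p ∈ T, p.coeff 0 = 1) :
    (∀ p ∈ T, p ∈ nonZeroDivisors (Polynomial A)) ∧
    (∀ p ∈ T, IsUnit ((Polynomial.coeToPowerSeries.ringHom : Polynomial A →+* PowerSeries A) p)) ∧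
    ∀ (h : ∀ t : T, IsUnit ((Polynomial.coeToPowerSeries.ringHom :
        Polynomial A →+* PowerSeries A) t)),
      Function.Injective
        (IsLocalization.lift (S := Localization T)
          (g := (Polynomial.coeToPowerSeries.ringHom : Polynomial A →+* PowerSeries A)) h) := by
  have hinj : Function.Injective
      ((Polynomial.coeToPowerSeries.ringHom : Polynomial A →+* PowerSeries A)) := by
    intro a b hab
    ext n
    have := congrArg (PowerSeries.coeff n) hab
    simpa using this
  have hunit : ∀ p ∈ T, IsUnit ((Polynomial.coeToPowerSeries.ringHom :
      Polynomial A →+* PowerSeries A) p) := by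
    intro p hp
    rw [PowerSeries.isUnit_iff_constantCoeff]
    have : (PowerSeries.constantCoeff (R := A)) ((p : PowerSeries A)) = p.coeff 0 := by
      simp
    rw [Polynomial.coeToPowerSeries.ringHom_apply] at *
    rw [this, hT p hp]
    exact isUnit_one
  refine ⟨?_, hunit, ?_⟩
  · intro p hp
    rw [mem_nonZeroDivisors_iff_right]
    intro q hq
    apply hinj
    have := (hunit p hp).mul_left_cancel (b := (Polynomial.coeToPowerSeries.ringHom q))
      (c := Polynomial.coeToPowerSeries.ringHom 0)
    rw [← map_mul, ← map_mul, mul_comm] at this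
    simpa using this (by rw [hq]; ring_nf)
  · intro h
    rw [injective_iff_map_eq_zero]
    intro x hx
    obtain ⟨⟨r, t⟩, hrt⟩ := IsLocalization.surj (M := T) (S := Localization T) x
    have h0 : (Polynomial.coeToPowerSeries.ringHom r) = 0 := by
      have := congrArg (IsLocalization.lift (S := Localization T)
        (g := (Polynomial.coeToPowerSeries.ringHom : Polynomial A →+* PowerSeries A)) h) hrt
      rw [map_mul, hx, IsLocalization.lift_eq, IsLocalization.lift_eq, zero_mul] at this
      exact this.symm
    have hr : r = 0 := hinj (by simpa using h0)
    have : x * (algebraMap (Polynomial A) (Localization T)) t = 0 := by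
      rw [hrt, hr, map_zero]
    rcases IsUnit.exists_right_inv
        (IsLocalization.map_units (Localization T) t) with ⟨u, hu⟩
    calc x = x * ((algebraMap (Polynomial A) (Localization T)) t * u) := by rw [hu, mul_one]
    _ = 0 := by rw [← mul_assoc, this, zero_mul]
end
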